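/- Let α be a partially ordered set which is locally finite in the causal-set sense: for all x z : α, the set {y : α | x ≤ y ∧ y ≤ z} is finite. Then: (i) for all x y : α, x ≤ y if and only if Relation.ReflTransGen (· ⋖ ·) x y, where ⋖ is the covering relation; (ii) the covering relation is non-transitive: if x ⋖ y and y ⋖ z then ¬ (x ⋖ z); (iii) the covering relation is acyclic: for all x, ¬ Relation.TransGen (· ⋖ ·) x x. -/
import Mathlib

/-- A locally finite partial order (a causal set) gives rise to a non-transitive
acyclic digraph via its covering relation, whose reflexive-transitive closure
recovers the order. -/
theorem causalSet_to_nontransitive_acyclic_digraph {α : Type*} [PartialOrder α]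
    (hlf : ∀ x z : α, {y : α | x ≤ y ∧ y ≤ z}.Finite) :
    (∀ x y : α, x ≤ y ↔ Relation.ReflTransGen (· ⋖ ·) x y) ∧
    (∀ x y z : α, x ⋖ y → y ⋖ z → ¬ x ⋖ z) ∧
    (∀ x : α, ¬ Relation.TransGen (· ⋖ ·) x x) := by
  letI : LocallyFiniteOrder α := LocallyFiniteOrder.ofFiniteIcc hlf
  refine ⟨fun x y => le_iff_reflTransGen_covBy, ?_, ?_⟩
  · intro x y z hxy hyz hxz
    exact hxz.2 hxy.1 hyz.1
  · intro x h
    have : x < x := lt_iff_transGen_covBy.mpr h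
    exact lt_irrefl x this
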